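/- Let l1,l2,l3>0 with l1+l2+l3=1, τ∈ℝ, and k>0 real with sin(kl2)≠0, and suppose 2cot(kl2) − 2cos(τ)/sin(kl2) = k(l1+l3). Define u(x) := e^{−iτx}·(sin(k(l2−x)) + e^{iτ}·sin(kx))/sin(kl2). Then ∫₀^{l2} |u(x)|² dx + (l1+l3) = (l1+l3)/2 + l2·(1 − cos(τ)·cos(kl2))/sin²(kl2). -/

import Mathlib

open MeasureTheory

/-- Section 6.1 of the paper: the squared norm in `H_hom = L²(0,l2) ⊕ ℂ` of the Bloch
eigenvector `ū(k) = (u(1, e^{i(l1+l3)τ}; ·), √(l1+l3))` of the homogenised operator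
`A_hom^{(τ)}` at an eigenvalue `k²` satisfying the dispersion relation (6.4). -/
theorem bloch_eigenvector_norm_delta (l1 l2 l3 : ℝ) (hl1 : 0 < l1) (hl2 : 0 < l2)
    (hl3 : 0 < l3) (hsum : l1 + l2 + l3 = 1) (τ : ℝ) (k : ℝ) (hk : 0 < k)
    (hs : Real.sin (k * l2) ≠ 0)
    (hdisp : 2 * Real.cos (k * l2) / Real.sin (k * l2)
        - 2 * Real.cos τ / Real.sin (k * l2) = k * (l1 + l3))
    (u : ℝ → ℂ)
    (hu : u = fun x : ℝ => Complex.exp (-(Complex.I * (τ : ℂ) * (x : ℂ))) *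
      ((Complex.sin ((k : ℂ) * ((l2 : ℂ) - (x : ℂ))) +
        Complex.exp (Complex.I * (τ : ℂ)) * Complex.sin ((k : ℂ) * (x : ℂ))) /
        Complex.sin ((k : ℂ) * (l2 : ℂ)))) :
    (∫ x in Set.Ioo (0 : ℝ) l2, ‖u x‖ ^ 2) + (l1 + l3)
      = (l1 + l3) / 2 +
        l2 * (1 - Real.cos τ * Real.cos (k * l2)) / (Real.sin (k * l2)) ^ 2 := by
  have hk0 : k ≠ 0 := hk.ne'
  set s := Real.sin (k * l2) with hsdef
  set c := Real.cos τ with hcdef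
  set f : ℝ → ℝ := fun x => (Real.sin (k*(l2 - x))^2 + Real.sin (k*x)^2
       + 2 * c * Real.sin (k*(l2-x)) * Real.sin (k*x)) / s^2 with hf
  set F : ℝ → ℝ := fun y => (1/(2*s^2)) * (2*y + Real.sin (2*k*(l2-y))/(2*k)
        - Real.sin (2*k*y)/(2*k) - (c/k) * Real.sin (k*l2 - 2*k*y) - 2*c*Real.cos (k*l2)*y)
    with hF
  -- pointwise norm computation
  have hpt : ∀ x : ℝ, ‖u x‖ ^ 2 = f x := by
    intro x
    rw [hu, hf]
    have h1 : Complex.exp (Complex.I * (τ:ℂ)) = Complex.cos τ + Complex.sin τ * Complex.I := by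
      rw [mul_comm, Complex.exp_mul_I]
    have e1 : ((k : ℂ) * ((l2 : ℂ) - (x : ℂ))) = ((k*(l2-x) : ℝ) : ℂ) := by push_cast; ring
    have e2 : ((k : ℂ) * (x : ℂ)) = ((k*x : ℝ) : ℂ) := by push_cast; ring
    have e3 : ((k : ℂ) * (l2 : ℂ)) = ((k*l2 : ℝ) : ℂ) := by push_cast; ring
    have hden : ‖Complex.sin ((k : ℂ) * (l2 : ℂ))‖ ^ 2 = s ^ 2 := by
      rw [e3, ← Complex.ofReal_sin, Complex.norm_real, Real.norm_eq_abs, sq_abs, hsdef]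
    have hnum : ‖Complex.sin ((k : ℂ) * ((l2 : ℂ) - (x : ℂ))) +
          Complex.exp (Complex.I * (τ : ℂ)) * Complex.sin ((k : ℂ) * (x : ℂ))‖ ^ 2
        = Real.sin (k*(l2 - x))^2 + Real.sin (k*x)^2
          + 2 * c * Real.sin (k*(l2-x)) * Real.sin (k*x) := by
      rw [e1, e2, ← Complex.ofReal_sin, ← Complex.ofReal_sin, h1,
        Complex.sq_norm, Complex.normSq_apply]
      simp only [Complex.add_re, Complex.add_im, Complex.mul_re, Complex.mul_im,
        Complex.ofReal_re, Complex.ofReal_im, Complex.I_re, Complex.I_im,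
        Complex.cos_ofReal_re, Complex.cos_ofReal_im, Complex.sin_ofReal_re,
        Complex.sin_ofReal_im, hcdef]
      nlinarith [Real.sin_sq_add_cos_sq τ]
    have hexp : ‖Complex.exp (-(Complex.I * (τ : ℂ) * (x : ℂ)))‖ = 1 := by
      rw [Complex.norm_exp]
      simp [Complex.neg_re, Complex.mul_re]
    rw [norm_mul, hexp, one_mul, norm_div, div_pow, hnum, hden]
  -- derivative
  have key : ∀ x : ℝ, HasDerivAt F (f x) x := by
    intro x
    have i1 : HasDerivAt (fun y : ℝ => 2*k*(l2-y)) (-(2*k)) x := by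
      simpa using ((hasDerivAt_id x).const_sub l2).const_mul (2*k)
    have i2 : HasDerivAt (fun y : ℝ => 2*k*y) (2*k) x := by
      simpa using (hasDerivAt_id x).const_mul (2*k)
    have i3 : HasDerivAt (fun y : ℝ => k*l2 - 2*k*y) (-(2*k)) x := by
      simpa using i2.const_sub (k*l2)
    have d1 := (Real.hasDerivAt_sin (2*k*(l2-x))).comp x i1
    have d2 := (Real.hasDerivAt_sin (2*k*x)).comp x i2
    have d3 := (Real.hasDerivAt_sin (k*l2 - 2*k*x)).comp x i3
    have d0 : HasDerivAt (fun y : ℝ => 2*y) 2 x := by simpa using (hasDerivAt_id x).const_mul 2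
    have d4 : HasDerivAt (fun y : ℝ => 2*c*Real.cos (k*l2)*y) (2*c*Real.cos (k*l2)) x := by
      simpa using (hasDerivAt_id x).const_mul (2*c*Real.cos (k*l2))
    have D := ((((d0.add (d1.div_const (2*k))).sub (d2.div_const (2*k))).sub
        (d3.const_mul (c/k))).sub d4).const_mul (1/(2*s^2))
    rw [hF, hf]
    convert D using 1
    case e'_4 => rfl
    case e'_5 => rfl
    case e'_8 => rfl
    have h1 : Real.cos (2*k*(l2-x)) = 1 - 2*Real.sin (k*(l2-x))^2 := by
      rw [show 2*k*(l2-x) = 2*(k*(l2-x)) by ring, Real.cos_two_mul']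
      linear_combination Real.sin_sq_add_cos_sq (k*(l2-x))
    have h2 : Real.cos (2*k*x) = 1 - 2*Real.sin (k*x)^2 := by
      rw [show 2*k*x = 2*(k*x) by ring, Real.cos_two_mul']
      linear_combination Real.sin_sq_add_cos_sq (k*x)
    have h3 : Real.cos (k*l2 - 2*k*x) = Real.cos (k*(l2-x))*Real.cos (k*x)
        + Real.sin (k*(l2-x))*Real.sin (k*x) := by
      rw [show k*l2 - 2*k*x = k*(l2-x) - k*x by ring, Real.cos_sub]
    have h4 : Real.cos (k*l2) = Real.cos (k*(l2-x))*Real.cos (k*x)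
        - Real.sin (k*(l2-x))*Real.sin (k*x) := by
      rw [show k*l2 = k*(l2-x) + k*x by ring, Real.cos_add]
    rw [h1, h2, h3, h4]
    field_simp
    ring
  -- continuity / integrability
  have hfc : Continuous f := by
    rw [hf]; fun_prop
  -- evaluate the integral
  have hint : (∫ x in Set.Ioo (0 : ℝ) l2, ‖u x‖ ^ 2) = F l2 - F 0 := by
    have : (∫ x in Set.Ioo (0 : ℝ) l2, ‖u x‖ ^ 2) = ∫ x in Set.Ioo (0 : ℝ) l2, f x := by
      simp only [hpt]
    rw [this, ← MeasureTheory.integral_Ioc_eq_integral_Ioo,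
      ← intervalIntegral.integral_of_le hl2.le]
    exact intervalIntegral.integral_eq_sub_of_hasDerivAt (fun x _ => key x)
      (hfc.intervalIntegrable 0 l2)
  rw [hint, hF]
  have hd2 : 2*Real.cos (k*l2) - 2*c = k*(l1+l3)*s := by
    have h := hdisp
    field_simp at h
    linarith
  have hstwo : Real.sin (2*k*l2) = 2 * s * Real.cos (k*l2) := by
    rw [show 2*k*l2 = 2*(k*l2) by ring, Real.sin_two_mul, hsdef]
  simp only [sub_self, mul_zero, Real.sin_zero, zero_div, sub_zero, mul_zero,
    show (2:ℝ)*k*(l2-l2) = 0 by ring, show k*l2 - 2*k*l2 = -(k*l2) by ring,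
    Real.sin_neg, show (2:ℝ)*k*(l2-0) = 2*k*l2 by ring, show (2:ℝ)*k*0 = 0 by ring,
    show k*l2 - 2*k*0 = k*l2 by ring]
  rw [hstwo]
  field_simp
  have hss : Real.sin (l2*k) = s := by rw [hsdef, mul_comm]
  have hcc : Real.cos (l2*k) = Real.cos (k*l2) := by rw [mul_comm]
  ring_nf
  linear_combination 2*c*hss - 2*s*hcc - s*hd2
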